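/- Let u0, u1, u2 > 0 and u3 ∈ ℝ, and suppose the quadratic q(c) = u1 c² + 2 u2 c + u3 is nonnegative for all c ∈ [-1,1] and its discriminant 4(u2² − u1 u3) is positive. Then both roots of q are ≤ −1, q is strictly increasing on [-1,1], and f2(c) = 1 + u0·c + √(q(c)) attains its maximum on [-1,1] only at c = 1. -/

import Mathlib

open Real

theorem stmt6 (u0 u1 u2 u3 : ℝ) (h0 : 0 < u0) (h1 : 0 < u1) (h2 : 0 < u2)
    (hq : ∀ c ∈ Set.Icc (-1:ℝ) 1, 0 ≤ u1 * c^2 + 2 * u2 * c + u3)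
    (hd : 0 < 4 * (u2^2 - u1 * u3)) :
    let q : ℝ → ℝ := fun c => u1 * c^2 + 2 * u2 * c + u3
    let f2 : ℝ → ℝ := fun c => 1 + u0 * c + Real.sqrt (q c)
    ((∀ r : ℝ, q r = 0 → r ≤ -1) ∧
      StrictMonoOn q (Set.Icc (-1:ℝ) 1) ∧
      (∀ c ∈ Set.Icc (-1:ℝ) 1, c ≠ 1 → f2 c < f2 1)) := by
  intro q f2
  have hD : 0 < u2^2 - u1*u3 := by linarith
  set s := Real.sqrt (u2^2 - u1*u3) with hs
  have hspos : 0 < s := Real.sqrt_pos.mpr hD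
  have hs2 : s^2 = u2^2 - u1*u3 := Real.sq_sqrt hD.le
  have hu1 : u1 ≠ 0 := ne_of_gt h1
  set r1 := (-u2 - s)/u1 with hr1
  set r2 := (-u2 + s)/u1 with hr2
  have e1 : u1 * r1 = -u2 - s := by rw [hr1]; field_simp
  have e2 : u1 * r2 = -u2 + s := by rw [hr2]; field_simp
  have hfac : ∀ c, q c = u1 * (c - r1) * (c - r2) := by
    intro c
    have h : u1 * (u1 * (c - r1) * (c - r2)) = u1 * (u1 * c^2 + 2*u2*c + u3) := by
      have h' : u1 * (u1 * (c - r1) * (c - r2)) =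
          (u1*c - u1*r1) * (u1*c - u1*r2) := by ring
      rw [h', e1, e2]
      nlinarith [hs2]
    have := mul_left_cancel₀ hu1 h
    simpa [q] using this.symm
  have hr12 : r1 < r2 := by nlinarith [e1, e2, hspos, h1]
  have hr1neg : r1 < 0 := by nlinarith [e1, hspos, h1, h2]
  -- key claim: r2 ≤ -1
  have hr2le : r2 ≤ -1 := by
    by_contra hcon
    push_neg at hcon
    set a := max r1 (-1 : ℝ) with ha
    set b := min r2 (1 : ℝ) with hb
    have hab : a < b :=
      max_lt (lt_min hr12 (lt_trans hr1neg one_pos)) (lt_min hcon (by norm_num))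
    set m := (a + b) / 2 with hm
    have hma : a < m := by rw [hm]; linarith
    have hmb : m < b := by rw [hm]; linarith
    have hmem : m ∈ Set.Icc (-1:ℝ) 1 := by
      constructor
      · have : (-1:ℝ) ≤ a := le_max_right _ _
        linarith
      · have : b ≤ 1 := min_le_right _ _
        linarith
    have hqm := hq m hmem
    have hmr1 : r1 < m := lt_of_le_of_lt (le_max_left _ _) hma
    have hmr2 : m < r2 := lt_of_lt_of_le hmb (min_le_left _ _)
    have : q m < 0 := by
      rw [hfac]
      have : u1 * (m - r1) > 0 := mul_pos h1 (by linarith)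
      nlinarith
    simp only [q] at this
    linarith
  refine ⟨?_, ?_, ?_⟩
  · intro r hr
    rw [hfac] at hr
    rcases mul_eq_zero.mp hr with h | h
    · rcases mul_eq_zero.mp h with h | h
      · exact absurd h hu1
      · have : r = r1 := by linarith [sub_eq_zero.mp h]
        linarith
    · have : r = r2 := by linarith [sub_eq_zero.mp h]
      linarith
  · -- strict mono
    have hu12 : u1 ≤ u2 := by
      have : -u2 + s ≤ u1 * (-1) := by
        rw [← e2]; nlinarith [hr2le, h1]
      linarith
    intro x hx y hy hxy
    simp only [q]
    have hx1 : -1 ≤ x := hx.1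
    have hy1 : -1 < y := lt_of_le_of_lt hx1 hxy
    nlinarith [mul_pos h1 (sub_pos.mpr hxy)]
  · intro c hc hne
    have hclt : c < 1 := lt_of_le_of_ne hc.2 hne
    have hqle : q c ≤ q 1 := by
      simp only [q]
      have hx1 : -1 ≤ c := hc.1
      have hu12 : u1 ≤ u2 := by
        have : -u2 + s ≤ u1 * (-1) := by
          rw [← e2]; nlinarith [hr2le, h1]
        linarith
      nlinarith [mul_nonneg (mul_nonneg h1.le (by linarith : (0:ℝ) ≤ 1 + c))
        (by linarith : (0:ℝ) ≤ 1 - c), mul_nonneg h2.le (by linarith : (0:ℝ) ≤ 1 - c)]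
    have hsq : Real.sqrt (q c) ≤ Real.sqrt (q 1) := Real.sqrt_le_sqrt hqle
    have : u0 * c < u0 * 1 := by nlinarith
    simp only [f2]
    linarith [hsq]
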